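/- arXiv:1103.3762 — 3 statements merged into one kernel-verified Lean document; each statement's English description precedes it below -/
import Mathlib

section
/- The set P_d = (ℝ ∪ {∞}) \ {√d, -√d} with operation x ⊙_d y = (d + xy)/(x + y) (suitably extended to ∞) forms a commutative group with identity ∞ and inverse of x given by -x, isomorphic to the multiplicative group ℝ* via ρ_d. -/
/-- The transform ρ_d(x) = √d·(x+1)/(x-1). -/
noncomputable def rho (d x : ℝ) : ℝ := Real.sqrt d * (x + 1) / (x - 1)

/-- The product ⊙_d extended to ℝ ∪ {∞}, where `none` plays the role of ∞:
∞ is the identity and x ⊙_d (-x) = ∞. -/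
noncomputable def odotInf (d : ℝ) : Option ℝ → Option ℝ → Option ℝ
  | none, y => y
  | some x, none => some x
  | some x, some y => if x + y = 0 then none else some ((d + x * y) / (x + y))

/-- P_d = (ℝ ∪ {∞}) \ {√d, -√d}. -/
def Pd (d : ℝ) : Type := {a : Option ℝ // a ≠ some (Real.sqrt d) ∧ a ≠ some (-Real.sqrt d)}

section aux

variable {d : ℝ} (hd : 0 < d)

lemma sqrt_ne (hd : 0 < d) : Real.sqrt d ≠ 0 := ne_of_gt (Real.sqrt_pos.2 hd)

lemma rho_ne_sqrt (hd : 0 < d) {x : ℝ} (hx : x ≠ 1) : rho d x ≠ Real.sqrt d := by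
  have h1 : x - 1 ≠ 0 := sub_ne_zero.2 hx
  unfold rho
  intro h
  rw [div_eq_iff h1] at h
  have hs := sqrt_ne hd
  have h2 := mul_left_cancel₀ hs h
  linarith

lemma rho_ne_neg_sqrt (hd : 0 < d) {x : ℝ} (hx : x ≠ 1) (hx0 : x ≠ 0) :
    rho d x ≠ -Real.sqrt d := by
  have h1 : x - 1 ≠ 0 := sub_ne_zero.2 hx
  unfold rho
  intro h
  rw [div_eq_iff h1] at h
  have hs := sqrt_ne hd
  apply hx0
  have h2 : Real.sqrt d * (2 * x) = 0 := by linear_combination h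
  rcases mul_eq_zero.1 h2 with h3 | h3
  · exact absurd h3 hs
  · linarith

lemma rho_inj (hd : 0 < d) {x y : ℝ} (hx : x ≠ 1) (hy : y ≠ 1)
    (h : rho d x = rho d y) : x = y := by
  have h1 : x - 1 ≠ 0 := sub_ne_zero.2 hx
  have h2 : y - 1 ≠ 0 := sub_ne_zero.2 hy
  have hs := sqrt_ne hd
  unfold rho at h
  field_simp at h
  have h4 : Real.sqrt d * (2 * (y - x)) = 0 := by linear_combination Real.sqrt d * h
  rcases mul_eq_zero.1 h4 with h5 | h5
  · exact absurd h5 hs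
  · linarith

lemma rho_sum (hd : 0 < d) {x y : ℝ} (hx : x ≠ 1) (hy : y ≠ 1) :
    rho d x + rho d y = 2 * Real.sqrt d * (x * y - 1) / ((x - 1) * (y - 1)) := by
  have h1 : x - 1 ≠ 0 := sub_ne_zero.2 hx
  have h2 : y - 1 ≠ 0 := sub_ne_zero.2 hy
  unfold rho
  field_simp
  ring

lemma rho_mul (hd : 0 < d) {x y : ℝ} (hx : x ≠ 1) (hy : y ≠ 1) (hxy : x * y ≠ 1) :
    rho d (x * y) = (d + rho d x * rho d y) / (rho d x + rho d y) := by
  have h1 : x - 1 ≠ 0 := sub_ne_zero.2 hx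
  have h2 : y - 1 ≠ 0 := sub_ne_zero.2 hy
  have h3 : x * y - 1 ≠ 0 := sub_ne_zero.2 hxy
  have hs := sqrt_ne hd
  have hsum : rho d x + rho d y = 2 * Real.sqrt d * (x * y - 1) / ((x - 1) * (y - 1)) :=
    rho_sum hd hx hy
  have hsumne : rho d x + rho d y ≠ 0 := by
    rw [hsum]
    apply div_ne_zero
    · positivity
    · exact mul_ne_zero h1 h2
  have hd2 : Real.sqrt d * Real.sqrt d = d := Real.mul_self_sqrt hd.le
  rw [eq_div_iff hsumne, hsum]
  unfold rho
  field_simp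
  linear_combination ((x-1)*(y-1)*(x-1)*(y-1)*(x*y-1) + (2 - 3*x + 4*x*y - x*y^3 + x^2 - 3*x^2*y^2 + 2*x^2*y^3 - x^3*y + 2*x^3*y^2 - x^3*y^3 - 3*y + y^2)) * hd2

/-- The map ℝˣ → P_d. -/
noncomputable def phi (hd : 0 < d) (u : ℝˣ) : Pd d :=
  ⟨if (u : ℝ) = 1 then none else some (rho d (u : ℝ)), by
    split
    · simp
    · rename_i h
      refine ⟨?_, ?_⟩ <;> simp only [ne_eq, Option.some.injEq]
      · exact rho_ne_sqrt hd h
      · exact rho_ne_neg_sqrt hd h u.ne_zero⟩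

lemma phi_val (hd : 0 < d) (u : ℝˣ) :
    (phi hd u).val = if (u : ℝ) = 1 then none else some (rho d (u : ℝ)) := rfl

lemma phi_bij (hd : 0 < d) : Function.Bijective (phi hd) := by
  constructor
  · intro u v h
    have h' := congrArg Subtype.val h
    rw [phi_val, phi_val] at h'
    by_cases h1 : (u : ℝ) = 1 <;> by_cases h2 : (v : ℝ) = 1 <;>
      simp only [h1, h2, if_true, if_false, reduceCtorEq] at h'
    · exact Units.ext (by rw [h1, h2])
    · simp only [Option.some.injEq] at h'
      exact Units.ext (rho_inj hd h1 h2 h')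
  · rintro ⟨a, ha1, ha2⟩
    match a with
    | none =>
      exact ⟨1, Subtype.ext (by rw [phi_val]; simp)⟩
    | some x =>
      have hx1 : x ≠ Real.sqrt d := fun h => ha1 (by rw [h])
      have hx2 : x ≠ -Real.sqrt d := fun h => ha2 (by rw [h])
      have hs := sqrt_ne hd
      have hden : x - Real.sqrt d ≠ 0 := sub_ne_zero.2 hx1
      have hnum : x + Real.sqrt d ≠ 0 := fun h => hx2 (by linarith [h])
      set u : ℝ := (x + Real.sqrt d) / (x - Real.sqrt d) with hu
      have hu0 : u ≠ 0 := div_ne_zero hnum hden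
      have hu1 : u ≠ 1 := by
        intro h
        rw [hu, div_eq_one_iff_eq hden] at h
        have : Real.sqrt d = 0 := by linarith
        exact hs this
      refine ⟨Units.mk0 u hu0, Subtype.ext ?_⟩
      rw [phi_val]
      simp only [Units.val_mk0, hu1, if_false, Option.some.injEq]
      have hden2 : u - 1 ≠ 0 := sub_ne_zero.2 hu1
      unfold rho
      rw [div_eq_iff hden2, hu]
      field_simp
      ring

lemma phi_hom (hd : 0 < d) (u v : ℝˣ) :
    (phi hd (u * v)).val = odotInf d (phi hd u).val (phi hd v).val := by
  rw [phi_val, phi_val, phi_val]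
  by_cases hu : (u : ℝ) = 1
  · simp [hu, odotInf]
  by_cases hv : (v : ℝ) = 1
  · simp [hv, hu, odotInf]
  simp only [hu, hv, if_false, Units.val_mul, odotInf]
  by_cases hsum0 : rho d (u : ℝ) + rho d (v : ℝ) = 0
  · have huv : (u : ℝ) * (v : ℝ) = 1 := by
      rw [rho_sum hd hu hv] at hsum0
      have h1 : (u : ℝ) - 1 ≠ 0 := sub_ne_zero.2 hu
      have h2 : (v : ℝ) - 1 ≠ 0 := sub_ne_zero.2 hv
      have hs := sqrt_ne hd
      rw [div_eq_zero_iff] at hsum0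
      rcases hsum0 with h | h
      · rcases mul_eq_zero.1 h with h' | h'
        · exact absurd h' (by positivity)
        · linarith [sub_eq_zero.1 h']
      · exact absurd h (mul_ne_zero h1 h2)
    simp [huv, hsum0]
  · have huv : (u : ℝ) * (v : ℝ) ≠ 1 := by
      intro h
      apply hsum0
      rw [rho_sum hd hu hv, h]
      simp
    simp only [huv, hsum0, if_false]
    rw [rho_mul hd hu hv huv]

end aux

/-- (P_d, ⊙_d) is a commutative group with identity ∞, inverse x ↦ -x, and ρ_d is an
isomorphism from (ℝ*, ·) onto it (where ρ_d(1) = ∞). -/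
theorem Pd_commGroup (d : ℝ) (hd : 0 < d) (hns : ¬ ∃ q : ℚ, (q : ℝ) ^ 2 = d) :
    ∃ G : CommGroup (Pd d),
      (∀ x y : Pd d, (G.mul x y).val = odotInf d x.val y.val) ∧
      (G.one.val = none) ∧
      (∀ x : Pd d, (G.inv x).val = Option.map (fun r => -r) x.val) ∧
      ∃ e : @MulEquiv ℝˣ (Pd d) _ G.toMul,
        ∀ u : ℝˣ, (e u).val = if (u : ℝ) = 1 then none else some (rho d (u : ℝ)) := by
  set Φ : ℝˣ ≃ Pd d := Equiv.ofBijective _ (phi_bij hd) with hΦ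
  have hΦ_app : ∀ u, Φ u = phi hd u := fun u => rfl
  set E : Pd d ≃ ℝˣ := Φ.symm with hE
  letI G : CommGroup (Pd d) := E.commGroup
  have hmul : ∀ x y : Pd d, G.mul x y = Φ (E x * E y) := fun x y => rfl
  have hone : G.one = Φ 1 := by
    show E.symm 1 = Φ 1
    simp [hE]
  have hinv : ∀ x : Pd d, G.inv x = Φ (E x)⁻¹ := fun x => rfl
  have hmul' : ∀ x y : Pd d, (G.mul x y).val = odotInf d x.val y.val := by
    intro x y
    rw [hmul]
    have hx : x = Φ (E x) := (Φ.apply_symm_apply x).symm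
    have hy : y = Φ (E y) := (Φ.apply_symm_apply y).symm
    conv_rhs => rw [hx, hy]
    exact phi_hom hd (E x) (E y)
  refine ⟨G, hmul', ?_, ?_, ?_⟩
  · rw [hone, hΦ_app, phi_val]
    simp
  · intro x
    rw [hinv]
    have hx : x = Φ (E x) := (Φ.apply_symm_apply x).symm
    conv_rhs => rw [hx]
    set u := E x
    rw [hΦ_app, hΦ_app, phi_val, phi_val]
    by_cases hu : (u : ℝ) = 1
    · have : ((u⁻¹ : ℝˣ) : ℝ) = 1 := by
        rw [← Units.val_one] at hu ⊢
        rw [Units.ext hu]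
        simp
      simp [hu, this]
    · have hu' : ((u⁻¹ : ℝˣ) : ℝ) ≠ 1 := by
        intro h
        apply hu
        have : u⁻¹ = 1 := Units.ext (by rw [h]; simp)
        rw [← inv_inv u, this]
        simp
      simp only [hu, hu', if_false, Option.map_some]
      congr 1
      have hu0 : (u : ℝ) ≠ 0 := u.ne_zero
      have h1 : (u : ℝ) - 1 ≠ 0 := sub_ne_zero.2 hu
      have hcoe : ((u⁻¹ : ℝˣ) : ℝ) = (u : ℝ)⁻¹ := by simp
      have hne : (u : ℝ)⁻¹ - 1 ≠ 0 := by
        rw [← hcoe]; exact sub_ne_zero.2 hu'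
      unfold rho
      rw [hcoe, div_eq_iff hne]
      field_simp
      ring
  · refine ⟨E.mulEquiv.symm, ?_⟩
    intro u
    have : E.mulEquiv.symm u = E.symm u := Equiv.mulEquiv_symm_apply E u
    rw [this]
    show (Φ u).val = _
    rw [hΦ_app, phi_val]
end

section
/- For points (s,t), (u,v) on the Pell hyperbola H_d with t, v ≠ 0, the pushforward of ⊙_d under ε_d equals the Brahmagupta product: ε_d(τ(s,t) ⊙_d τ(u,v)) = (su + d t v, t u + s v). In particular ((1+s)/t) ⊙_d ((1+u)/v) = (1 + su + dtv)/(tu + sv). -/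
/-- The product x ⊙_d y = (d + xy)/(x + y). -/
noncomputable def odot (d x y : ℝ) : ℝ := (d + x * y) / (x + y)

/-- τ(x,y) = (1+x)/y. -/
noncomputable def tau (p : ℝ × ℝ) : ℝ := (1 + p.1) / p.2

/-- ε_d(m) = ((m²+d)/(m²−d), 2m/(m²−d)). -/
noncomputable def eps (d m : ℝ) : ℝ × ℝ :=
  ((m ^ 2 + d) / (m ^ 2 - d), 2 * m / (m ^ 2 - d))

/-- The pushforward of ⊙_d under ε_d is the Brahmagupta product. -/
theorem pushforward_is_brahmagupta (d : ℝ) (hd : 0 < d)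
    (hirr : Irrational (Real.sqrt d)) (s t u v : ℝ)
    (hst : s ^ 2 - d * t ^ 2 = 1) (huv : u ^ 2 - d * v ^ 2 = 1)
    (ht : t ≠ 0) (hv : v ≠ 0)
    (hsum : tau (s, t) + tau (u, v) ≠ 0) :
    eps d (odot d (tau (s, t)) (tau (u, v))) = (s * u + d * t * v, t * u + s * v) ∧
    odot d ((1 + s) / t) ((1 + u) / v) =
      (1 + (s * u + d * t * v)) / (t * u + s * v) := by
  have h1s : (1 : ℝ) + s ≠ 0 := by
    intro h
    apply ht
    have hs : s = -1 := by linarith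
    have ht2 : t ^ 2 = 0 := by
      have : d * t ^ 2 = 0 := by rw [hs] at hst; nlinarith
      exact (mul_eq_zero.mp this).resolve_left (ne_of_gt hd)
    exact pow_eq_zero_iff (n := 2) (by norm_num) |>.mp ht2
  have h1u : (1 : ℝ) + u ≠ 0 := by
    intro h
    apply hv
    have hu : u = -1 := by linarith
    have hv2 : v ^ 2 = 0 := by
      have : d * v ^ 2 = 0 := by rw [hu] at huv; nlinarith
      exact (mul_eq_zero.mp this).resolve_left (ne_of_gt hd)
    exact pow_eq_zero_iff (n := 2) (by norm_num) |>.mp hv2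
  have hsum' : (1 + s) / t + (1 + u) / v ≠ 0 := hsum
  set N : ℝ := d * t * v + (1 + s) * (1 + u) with hN
  set D : ℝ := (1 + s) * v + (1 + u) * t with hDdef
  have hD : D ≠ 0 := by
    have hDeq : D = ((1 + s) / t + (1 + u) / v) * (t * v) := by
      field_simp
      rw [hDdef]; ring
    rw [hDeq]
    exact mul_ne_zero hsum' (mul_ne_zero ht hv)
  have hm : odot d ((1 + s) / t) ((1 + u) / v) = N / D := by
    rw [odot, div_eq_div_iff hsum' hD]
    field_simp
    ring_nf
    rw [hN, hDdef]; ring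
    try exact Or.inl trivial
  have key1 : N ^ 2 - d * D ^ 2 = 4 * ((1 + s) * (1 + u)) := by
    rw [hN, hDdef]
    linear_combination (1 - v ^ 2 * d + 2 * u + u ^ 2) * hst + (2 + 2 * s) * huv
  have key2 : N ^ 2 + d * D ^ 2 = 4 * ((1 + s) * (1 + u)) * (s * u + d * t * v) := by
    rw [hN, hDdef]
    linear_combination (1 + v ^ 2 * d - 2 * u - 3 * u ^ 2) * hst +
      (-2 - 2 * t ^ 2 * d - 2 * s) * huv
  have key3 : 2 * (N * D) = 4 * ((1 + s) * (1 + u)) * (t * u + s * v) := by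
    rw [hN, hDdef]
    linear_combination (-2 * v - 2 * u * v) * hst + (-2 * t - 2 * s * t) * huv
  have h4su : (4 : ℝ) * ((1 + s) * (1 + u)) ≠ 0 :=
    mul_ne_zero (by norm_num) (mul_ne_zero h1s h1u)
  have hNe : N ^ 2 - d * D ^ 2 ≠ 0 := by rw [key1]; exact h4su
  have hmd : (N / D) ^ 2 - d ≠ 0 := by
    have : (N / D) ^ 2 - d = (N ^ 2 - d * D ^ 2) / D ^ 2 := by
      field_simp
    rw [this]
    exact div_ne_zero hNe (pow_ne_zero 2 hD)
  have hτ : tau (s, t) = (1 + s) / t := rfl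
  have hτ' : tau (u, v) = (1 + u) / v := rfl
  have h1 : (N / D) ^ 2 + d = (N ^ 2 + d * D ^ 2) / D ^ 2 := by field_simp
  have h2 : (N / D) ^ 2 - d = (N ^ 2 - d * D ^ 2) / D ^ 2 := by field_simp
  have heps : eps d (N / D) = (s * u + d * t * v, t * u + s * v) := by
    rw [eps, Prod.mk.injEq]
    constructor
    · rw [div_eq_iff hmd, h1, h2, key1, key2]
      ring
    · rw [div_eq_iff hmd, h2, key1]
      have h3 : 2 * (N / D) = 2 * (N * D) / D ^ 2 := by field_simp
      rw [h3, key3]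
      ring
  refine ⟨?_, ?_⟩
  · rw [hτ, hτ', hm, heps]
  · rw [hm]
    by_cases hT : t * u + s * v = 0
    · have hND : N * D = 0 := by
        have := key3
        rw [hT, mul_zero] at this
        linarith
      have hN0 : N = 0 := (mul_eq_zero.mp hND).resolve_right hD
      rw [hN0, hT, zero_div, div_zero]
    · have hNne : N ≠ 0 := by
        intro h0
        apply hT
        have h3 : (0 : ℝ) = 4 * ((1 + s) * (1 + u)) * (t * u + s * v) := by
          calc (0 : ℝ) = 2 * (N * D) := by rw [h0]; ring
          _ = _ := key3
        rcases mul_eq_zero.mp h3.symm with h | h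
        · exact absurd h h4su
        · exact h
      rw [div_eq_div_iff hD hT]
      have h2N : 2 * N ^ 2 = 4 * ((1 + s) * (1 + u)) * (1 + (s * u + d * t * v)) := by
        linarith [key1, key2]
      have hkey : N * (N * (t * u + s * v)) = N * ((1 + (s * u + d * t * v)) * D) := by
        linear_combination ((t * u + s * v) / 2) * h2N -
          ((1 + (s * u + d * t * v)) / 2) * key3
      have := mul_left_cancel₀ hNne hkey
      linarith
end

section
/- For any point (x,y) on H_d with y ≠ 0, the 2n-th ⊙_d-power of (1+x)/y equals N_n(x²−1,x)/(y·D_n(x²−1,x)); equivalently, (1 + N_{2n}(x²−1,x))/(y·D_{2n}(x²−1,x)) = N_n(x²−1,x)/(y·D_n(x²−1,x)). Consequently, if (x_1,y_1) satisfies x_1² − d y_1² = 1 and (x_n, y_n) is its n-th ⊙_H-power, then Q_{2n}(d, (x_1+1)/y_1) = x_n/y_n. -/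
/-- N_n(d,z) = Σ_{k=0}^{⌊n/2⌋} C(n,2k) d^k z^(n-2k). -/
def Nred {R : Type*} [CommRing R] (d z : R) (n : ℕ) : R :=
  ∑ k ∈ Finset.range (n / 2 + 1), (n.choose (2 * k) : R) * d ^ k * z ^ (n - 2 * k)

/-- D_n(d,z) = Σ_{k=0}^{⌊n/2⌋} C(n,2k+1) d^k z^(n-2k-1). -/
def Dred {R : Type*} [CommRing R] (d z : R) (n : ℕ) : R :=
  ∑ k ∈ Finset.range (n / 2 + 1), (n.choose (2 * k + 1) : R) * d ^ k * z ^ (n - 2 * k - 1)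

/-- The Rédei rational function Q_n(c,z) = N_n(c,z)/D_n(c,z). -/
noncomputable def Qred (c z : ℝ) (n : ℕ) : ℝ := Nred c z n / Dred c z n

/-- `odpow d z n` is the ⊙_d-product of n+1 copies of z. -/
noncomputable def odpow (d z : ℝ) : ℕ → ℝ
  | 0 => z
  | n + 1 => odot d (odpow d z n) z

/-- The Brahmagupta product (s,t) ⊙_H (u,v) = (su + dtv, tu + sv). -/
def pellMul (d : ℝ) (p q : ℝ × ℝ) : ℝ × ℝ :=
  (p.1 * q.1 + d * p.2 * q.2, p.2 * q.1 + p.1 * q.2)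

/-- n-th power with respect to ⊙_H, with identity (1,0). -/
def pellPow (d : ℝ) (p : ℝ × ℝ) : ℕ → ℝ × ℝ
  | 0 => (1, 0)
  | n + 1 => pellMul d (pellPow d p n) p

section Rec
variable {R : Type*} [CommRing R] (d z : R)

lemma Nred_zero' : Nred d z 0 = 1 := by simp [Nred]
lemma Dred_zero' : Dred d z 0 = 0 := by simp [Dred]

lemma Nred_big (n m : ℕ) (hm : n / 2 + 1 ≤ m) :
    Nred d z n = ∑ k ∈ Finset.range m, (n.choose (2 * k) : R) * d ^ k * z ^ (n - 2 * k) := by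
  rw [Nred]
  apply Finset.sum_subset (Finset.range_subset_range.2 hm)
  intro k _ hk
  simp only [Finset.mem_range, not_lt] at hk
  have : n < 2 * k := by omega
  simp [Nat.choose_eq_zero_of_lt this]

lemma Dred_big (n m : ℕ) (hm : n / 2 + 1 ≤ m) :
    Dred d z n = ∑ k ∈ Finset.range m, (n.choose (2 * k + 1) : R) * d ^ k * z ^ (n - 2 * k - 1) := by
  rw [Dred]
  apply Finset.sum_subset (Finset.range_subset_range.2 hm)
  intro k _ hk
  simp only [Finset.mem_range, not_lt] at hk
  have : n < 2 * k + 1 := by omega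
  simp [Nat.choose_eq_zero_of_lt this]

lemma Nred_succ (n : ℕ) : Nred d z (n + 1) = z * Nred d z n + d * Dred d z n := by
  rw [Nred_big d z (n+1) (n+2) (by omega), Nred_big d z n (n+2) (by omega),
      Dred_big d z n (n+1) (by omega), Finset.mul_sum, Finset.mul_sum,
      Finset.sum_range_succ' (fun k => ((n+1).choose (2*k) : R) * d ^ k * z ^ (n+1-2*k)) (n+1),
      Finset.sum_range_succ' (fun k => z * (((n).choose (2*k) : R) * d ^ k * z ^ (n-2*k))) (n+1)]
  rw [add_assoc, add_comm (z * _) _, ← add_assoc, ← Finset.sum_add_distrib]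
  congr 1
  · apply Finset.sum_congr rfl
    intro k _
    have he : 2 * (k + 1) = (2*k+1) + 1 := by ring
    rw [he, Nat.choose_succ_succ n (2*k+1)]
    have he2 : n + 1 - ((2*k+1)+1) = n - 2*k - 1 := by omega
    rw [he2]
    by_cases h : 2*k+2 ≤ n
    · have h3 : n - 2*(k+1) + 1 = n - 2*k - 1 := by omega
      rw [← h3, pow_succ]
      simp only [Nat.succ_eq_add_one]
      have hix : 2*k+1+1 = 2*k+2 := by omega
      rw [hix]
      push_cast
      ring
    · have h2 : n.choose (2*k+1+1) = 0 := Nat.choose_eq_zero_of_lt (by omega)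
      rw [h2]
      push_cast
      ring
  · simp [pow_succ]
    ring

lemma Dred_succ (n : ℕ) : Dred d z (n + 1) = Nred d z n + z * Dred d z n := by
  rw [Dred_big d z (n+1) (n+2) (by omega), Nred_big d z n (n+2) (by omega),
      Dred_big d z n (n+2) (by omega), Finset.mul_sum, ← Finset.sum_add_distrib]
  apply Finset.sum_congr rfl
  intro k _
  rw [Nat.choose_succ_succ n (2*k)]
  have he2 : n + 1 - 2*k - 1 = n - 2*k := by omega
  rw [he2]
  by_cases h : 2*k+1 ≤ n
  · have h3 : n - 2*k - 1 + 1 = n - 2*k := by omega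
    rw [← h3, pow_succ]
    push_cast
    ring
  · have h2 : n.choose (2*k+1) = 0 := Nat.choose_eq_zero_of_lt (by omega)
    rw [h2]
    push_cast
    ring

end Rec

lemma pellMul_assoc (d : ℝ) (p q r : ℝ × ℝ) :
    pellMul d (pellMul d p q) r = pellMul d p (pellMul d q r) := by
  simp only [pellMul, Prod.mk.injEq]
  constructor <;> ring

lemma pellPow_add (d : ℝ) (p : ℝ × ℝ) (m k : ℕ) :
    pellPow d p (m + k) = pellMul d (pellPow d p m) (pellPow d p k) := by
  induction k with
  | zero => simp [pellPow, pellMul]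
  | succ k ih =>
      rw [show m + (k+1) = (m+k)+1 from rfl]
      show pellMul d (pellPow d p (m+k)) p = _
      rw [ih, pellMul_assoc]
      rfl

lemma pellPow_two_mul (d : ℝ) (p : ℝ × ℝ) (n : ℕ) :
    pellPow d p (2 * n) = pellPow d (pellMul d p p) n := by
  induction n with
  | zero => rfl
  | succ n ih =>
      rw [show 2*(n+1) = (2*n) + 2 from by ring, pellPow_add, ih]
      show _ = pellMul d (pellPow d (pellMul d p p) n) (pellMul d p p)
      congr 1
      rw [show (2:ℕ) = 1 + 1 from rfl, pellPow_add]
      simp [pellPow, pellMul]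

lemma pellPow_smul (d a : ℝ) (p : ℝ × ℝ) (n : ℕ) :
    pellPow d (a * p.1, a * p.2) n =
      (a ^ n * (pellPow d p n).1, a ^ n * (pellPow d p n).2) := by
  induction n with
  | zero => simp [pellPow]
  | succ n ih =>
      show pellMul d _ _ = _
      rw [ih]
      show pellMul d _ _ = (a^(n+1) * (pellMul d (pellPow d p n) p).1,
        a^(n+1) * (pellMul d (pellPow d p n) p).2)
      simp only [pellMul, Prod.mk.injEq]
      constructor <;> ring

lemma pell_norm (d : ℝ) (p : ℝ × ℝ) (n : ℕ) :
    (pellPow d p n).1 ^ 2 - d * (pellPow d p n).2 ^ 2 = (p.1 ^ 2 - d * p.2 ^ 2) ^ n := by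
  induction n with
  | zero => simp [pellPow]
  | succ n ih =>
      conv_rhs => rw [pow_succ]
      rw [← ih]
      show (pellMul d (pellPow d p n) p).1 ^ 2 - d * (pellMul d (pellPow d p n) p).2 ^2 = _
      simp only [pellMul]
      ring

lemma pellPow_rep (d s : ℝ) (hs : s ^ 2 = d) (p : ℝ × ℝ) (n : ℕ) :
    (pellPow d p n).1 + (pellPow d p n).2 * s = (p.1 + p.2 * s) ^ n ∧
    (pellPow d p n).1 - (pellPow d p n).2 * s = (p.1 - p.2 * s) ^ n := by
  induction n with
  | zero => simp [pellPow]
  | succ n ih =>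
      constructor
      · rw [pow_succ, ← ih.1]
        show (pellMul d (pellPow d p n) p).1 + (pellMul d (pellPow d p n) p).2 * s = _
        simp only [pellMul]
        linear_combination -(pellPow d p n).2 * p.2 * hs
      · rw [pow_succ, ← ih.2]
        show (pellMul d (pellPow d p n) p).1 - (pellMul d (pellPow d p n) p).2 * s = _
        simp only [pellMul]
        linear_combination -(pellPow d p n).2 * p.2 * hs

/-- Pell powers of a point (x,y) in terms of Nred/Dred with parameter d y². -/
lemma pellPow_point (d x y : ℝ) (n : ℕ) :
    pellPow d (x, y) n = (Nred (d * y ^ 2) x n, y * Dred (d * y ^ 2) x n) := by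
  induction n with
  | zero => simp [pellPow, Nred_zero', Dred_zero']
  | succ n ih =>
      show pellMul d (pellPow d (x,y) n) (x,y) = _
      rw [ih, Nred_succ, Dred_succ]
      simp only [pellMul, Prod.mk.injEq]
      constructor <;> ring

lemma div_div_div_aux (a b c : ℝ) (hc : c ≠ 0) : (a / c) / (b / c) = a / b := by
  rcases eq_or_ne b 0 with h | h
  · simp [h]
  · field_simp

theorem redei_pell_convergents (d : ℕ) (hd : 0 < d) (hns : ¬ IsSquare d)
    (x y : ℝ) (hxy : x ^ 2 - (d : ℝ) * y ^ 2 = 1) (hy : y ≠ 0)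
    (n : ℕ) (hn : 1 ≤ n) :
    odpow (d : ℝ) ((1 + x) / y) (2 * n - 1) =
      Nred (x ^ 2 - 1) x n / (y * Dred (x ^ 2 - 1) x n) ∧
    (1 + Nred (x ^ 2 - 1) x (2 * n)) / (y * Dred (x ^ 2 - 1) x (2 * n)) =
      Nred (x ^ 2 - 1) x n / (y * Dred (x ^ 2 - 1) x n) ∧
    Qred (d : ℝ) ((x + 1) / y) (2 * n) =
      (pellPow (d : ℝ) (x, y) n).1 / (pellPow (d : ℝ) (x, y) n).2 := by
  have hdR : (0 : ℝ) < (d : ℝ) := by exact_mod_cast hd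
  have hdR' : (d : ℝ) ≠ 0 := ne_of_gt hdR
  have hy2 : (0:ℝ) < y ^ 2 := by positivity
  have hc : (d : ℝ) * y ^ 2 = x ^ 2 - 1 := by linarith
  have hcpos : (0:ℝ) < x ^ 2 - 1 := by rw [← hc]; positivity
  have hx1 : (1 : ℝ) + x ≠ 0 := by
    intro h
    have hx : x = -1 := by linarith
    rw [hx] at hxy
    have h0 : (d:ℝ) * y ^ 2 = 0 := by nlinarith
    rcases mul_eq_zero.mp h0 with h' | h'
    · exact hdR' h'
    · exact hy (by nlinarith [sq_nonneg y])
  have h2x : (2:ℝ) * (1 + x) ≠ 0 := by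
    intro h
    exact hx1 (by linarith)
  set s : ℝ := Real.sqrt d with hs_def
  have hs2 : s ^ 2 = (d : ℝ) := Real.sq_sqrt (le_of_lt hdR)
  have hs0 : s ≠ 0 := by
    intro h
    rw [h] at hs2
    simp at hs2
    exact hdR' hs2.symm
  set q : ℝ × ℝ := (1 + x, y) with hq_def
  -- second components of pellPow d q (k+1) are nonzero
  have hP2 : ∀ k : ℕ, (pellPow (d:ℝ) q (k + 1)).2 ≠ 0 := by
    intro k h0
    have h1 := (pellPow_rep (d:ℝ) s hs2 q (k+1)).1
    have h2 := (pellPow_rep (d:ℝ) s hs2 q (k+1)).2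
    rw [h0] at h1 h2
    simp only [zero_mul, add_zero, sub_zero] at h1 h2
    have huv : (q.1 + q.2 * s) ^ (k+1) = (q.1 - q.2 * s) ^ (k+1) := by rw [← h1, ← h2]
    have hprod : (q.1 + q.2 * s) * (q.1 - q.2 * s) = 2 * (1 + x) := by
      show ((1+x) + y * s) * ((1+x) - y * s) = 2 * (1+x)
      linear_combination hxy - y^2 * hs2
    have habs : |q.1 + q.2 * s| = |q.1 - q.2 * s| :=
      (pow_left_inj₀ (abs_nonneg _) (abs_nonneg _) (Nat.succ_ne_zero k)).mp
        (by rw [← abs_pow, ← abs_pow, huv])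
    rcases abs_eq_abs.mp habs with h | h
    · have hz : q.2 * s = 0 := by linarith
      rcases mul_eq_zero.mp hz with h' | h'
      · exact hy h'
      · exact hs0 h'
    · have hz : 2 * q.1 = 0 := by linarith
      have hq1 : q.1 = 0 := by linarith
      exact hx1 hq1
  -- representation of odpow
  have hrep : ∀ m : ℕ, odpow (d:ℝ) ((1 + x) / y) m =
      (pellPow (d:ℝ) q (m + 1)).1 / (pellPow (d:ℝ) q (m + 1)).2 := by
    intro m
    induction m with
    | zero => simp [odpow, pellPow, pellMul, hq_def]
    | succ m ih =>
        show odot (d:ℝ) (odpow (d:ℝ) ((1+x)/y) m) ((1+x)/y) = _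
        rw [ih]
        have hP : (pellPow (d:ℝ) q (m+1)).2 ≠ 0 := hP2 m
        set P : ℝ × ℝ := pellPow (d:ℝ) q (m+1) with hP_def
        have step : pellPow (d:ℝ) q (m+1+1) = pellMul (d:ℝ) P (1+x, y) := rfl
        rw [step, odot]
        have e1 : (d:ℝ) + P.1 / P.2 * ((1+x)/y) = (P.1 * (1+x) + (d:ℝ) * P.2 * y) / (P.2 * y) := by
          field_simp
          ring
        have e2 : P.1 / P.2 + (1+x)/y = (P.2 * (1+x) + P.1 * y) / (P.2 * y) := by
          field_simp
          ring
        rw [e1, e2, div_div_div_aux _ _ _ (mul_ne_zero hP hy)]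
        simp only [pellMul]
  -- pellMul q q is a scaled copy of (x,y)
  have hqq : pellMul (d:ℝ) q q = ((2*(1+x)) * x, (2*(1+x)) * y) := by
    simp only [pellMul, hq_def, Prod.mk.injEq]
    constructor
    · linear_combination -hxy
    · ring
  have hsmul : pellPow (d:ℝ) q (2 * n) =
      ((2*(1+x))^n * (pellPow (d:ℝ) (x,y) n).1, (2*(1+x))^n * (pellPow (d:ℝ) (x,y) n).2) := by
    rw [pellPow_two_mul, hqq]
    exact pellPow_smul (d:ℝ) (2*(1+x)) (x, y) n
  have ha0 : ((2:ℝ)*(1+x))^n ≠ 0 := pow_ne_zero _ h2x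
  have hpt : pellPow (d:ℝ) (x, y) n = (Nred (x^2-1) x n, y * Dred (x^2-1) x n) := by
    rw [pellPow_point, hc]
  refine ⟨?_, ?_, ?_⟩
  -- Goal 1
  · have hidx : 2 * n - 1 + 1 = 2 * n := by omega
    rw [hrep (2*n-1), hidx, hsmul]
    simp only
    rw [mul_div_mul_left _ _ ha0, hpt]
  -- Goal 2
  · set c : ℝ := x ^ 2 - 1 with hcdef
    have hbase : ∀ m : ℕ, pellPow c (x, 1) m = (Nred c x m, Dred c x m) := by
      intro m
      rw [pellPow_point]
      norm_num
    have hdd : (Nred c x (2*n), Dred c x (2*n)) =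
        pellMul c (Nred c x n, Dred c x n) (Nred c x n, Dred c x n) := by
      rw [← hbase (2*n), two_mul, pellPow_add, hbase n]
    have hnorm := pell_norm c (x, 1) n
    rw [hbase n] at hnorm
    simp only [one_pow, mul_one] at hnorm
    have hxc : x ^ 2 - c = 1 := by rw [hcdef]; ring
    rw [hxc, one_pow] at hnorm
    set N : ℝ := Nred c x n
    set D : ℝ := Dred c x n
    have h1 : Nred c x (2*n) = N * N + c * D * D := congrArg Prod.fst hdd
    have h2 : Dred c x (2*n) = D * N + N * D := congrArg Prod.snd hdd
    have hN0 : N ≠ 0 := by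
      intro h
      rw [h] at hnorm
      nlinarith [sq_nonneg D, mul_nonneg (le_of_lt hcpos) (sq_nonneg D)]
    have h2N : (2:ℝ) * N ≠ 0 := mul_ne_zero two_ne_zero hN0
    rw [h1, h2]
    have e1 : 1 + (N * N + c * D * D) = (2*N) * N := by linear_combination -hnorm
    have e2 : y * (D * N + N * D) = (2*N) * (y * D) := by ring
    rw [e1, e2, mul_div_mul_left _ _ h2N]
  -- Goal 3
  · have hz1 : pellPow (d:ℝ) ((x+1)/y, 1) (2*n) =
        (Nred (d:ℝ) ((x+1)/y) (2*n), Dred (d:ℝ) ((x+1)/y) (2*n)) := by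
      rw [pellPow_point]
      norm_num
    have he : ((x+1)/y, (1:ℝ)) = ((1/y) * q.1, (1/y) * q.2) := by
      rw [Prod.mk.injEq]
      constructor
      · show (x+1)/y = (1/y) * (1+x)
        ring
      · show (1:ℝ) = (1/y) * y
        field_simp
    have hz2 : pellPow (d:ℝ) ((x+1)/y, 1) (2*n) =
        ((1/y)^(2*n) * ((2*(1+x))^n * (pellPow (d:ℝ) (x,y) n).1),
         (1/y)^(2*n) * ((2*(1+x))^n * (pellPow (d:ℝ) (x,y) n).2)) := by
      rw [he, pellPow_smul (d:ℝ) (1/y) q (2*n), hsmul]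
    have hNz : Nred (d:ℝ) ((x+1)/y) (2*n) =
        (1/y)^(2*n) * ((2*(1+x))^n * (pellPow (d:ℝ) (x,y) n).1) :=
      congrArg Prod.fst (hz1.symm.trans hz2)
    have hDz : Dred (d:ℝ) ((x+1)/y) (2*n) =
        (1/y)^(2*n) * ((2*(1+x))^n * (pellPow (d:ℝ) (x,y) n).2) :=
      congrArg Prod.snd (hz1.symm.trans hz2)
    have hb0 : ((1:ℝ)/y)^(2*n) ≠ 0 := pow_ne_zero _ (one_div_ne_zero hy)
    rw [Qred, hNz, hDz, mul_div_mul_left _ _ hb0, mul_div_mul_left _ _ ha0]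
end
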